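/- Let V be an n-dimensional real vector space, let (F,G,H) be a transverse triple of complete flags in V, and let i,j,k,i',j',k' ∈ {0,…,n−1} be integers with i+j+k = n = i'+j'+k'. Let P be the projection of V onto F^(i) along G^(j) + H^(k) (the unique endomorphism equal to the identity on F^(i) and zero on G^(j) + H^(k)), and let Q be the projection of V onto G^(j') along H^(k') + F^(i'). Then tr(P ∘ Q) = max(0, min(i−i', j'−j)). -/
import Mathlib


/-- `F` is a complete flag in an `n`-dimensional real vector space:
`F 0 ⊆ F 1 ⊆ ⋯ ⊆ F n` with `dim (F l) = l` for `0 ≤ l ≤ n`. -/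
def IsFlag (n : ℕ) {V : Type*} [AddCommGroup V] [Module ℝ V]
    (F : ℕ → Submodule ℝ V) : Prop :=
  (∀ l, l < n → F l ≤ F (l + 1)) ∧ ∀ l, l ≤ n → Module.finrank ℝ (F l) = l

/-- A triple of flags is transverse if `F a + G b + H c = V` whenever `a + b + c = n`. -/
def TransverseTriple (n : ℕ) {V : Type*} [AddCommGroup V] [Module ℝ V]
    (F G H : ℕ → Submodule ℝ V) : Prop :=
  ∀ a b c : ℕ, a + b + c = n → F a ⊔ G b ⊔ H c = ⊤

/-- A pair of flags is transverse if `F a + G (n - a) = V` for all `0 ≤ a ≤ n`. -/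
def TransversePair (n : ℕ) {V : Type*} [AddCommGroup V] [Module ℝ V]
    (F G : ℕ → Submodule ℝ V) : Prop :=
  ∀ a, a ≤ n → F a ⊔ G (n - a) = ⊤

/-- `A` is the `(i,j,k)`-eruption endomorphism of the triple `(F,G,H)`: it acts as the
scalar `(n - i)/n` on `F i` and as the scalar `-i/n` on `G j + H k`. -/
def IsEruption (n i j k : ℕ) {V : Type*} [AddCommGroup V] [Module ℝ V]
    (F G H : ℕ → Submodule ℝ V) (A : Module.End ℝ V) : Prop :=
  (∀ v ∈ F i, A v = (((n : ℝ) - (i : ℝ)) / (n : ℝ)) • v) ∧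
  (∀ v ∈ G j ⊔ H k, A v = (-(i : ℝ) / (n : ℝ)) • v)

/-- `A` is the `(i, n-i)`-shearing endomorphism of the pair `(F,G)`: it acts as the
scalar `(n - i)/n` on `F i` and as the scalar `-i/n` on `G (n - i)`. -/
def IsShearing (n i : ℕ) {V : Type*} [AddCommGroup V] [Module ℝ V]
    (F G : ℕ → Submodule ℝ V) (A : Module.End ℝ V) : Prop :=
  (∀ v ∈ F i, A v = (((n : ℝ) - (i : ℝ)) / (n : ℝ)) • v) ∧
  (∀ v ∈ G (n - i), A v = (-(i : ℝ) / (n : ℝ)) • v)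

private lemma flag_mono {n : ℕ} {V : Type*} [AddCommGroup V] [Module ℝ V]
    {F : ℕ → Submodule ℝ V} (hF : IsFlag n F) {a b : ℕ} (hab : a ≤ b) (hb : b ≤ n) :
    F a ≤ F b := by
  induction b with
  | zero => rw [Nat.le_zero.mp hab]
  | succ m ih =>
    rcases Nat.eq_or_lt_of_le hab with h | h
    · subst h; exact le_rfl
    · exact (ih (Nat.lt_succ_iff.mp h) (le_trans (Nat.le_succ m) hb)).trans
        (hF.1 m (by omega))

private lemma mem_sup3 {V : Type*} [AddCommGroup V] [Module ℝ V]
    {A B C : Submodule ℝ V} (h : A ⊔ B ⊔ C = ⊤) (v : V) :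
    ∃ a ∈ A, ∃ b ∈ B, ∃ c ∈ C, v = a + b + c := by
  have hv : v ∈ A ⊔ B ⊔ C := h ▸ Submodule.mem_top
  obtain ⟨x, hx, c, hc, rfl⟩ := Submodule.mem_sup.mp hv
  obtain ⟨a, ha, b, hb, rfl⟩ := Submodule.mem_sup.mp hx
  exact ⟨a, ha, b, hb, c, hc, rfl⟩

theorem statement9 (n : ℕ) (V : Type*) [AddCommGroup V] [Module ℝ V] [FiniteDimensional ℝ V]
    (hV : Module.finrank ℝ V = n)
    (F G H : ℕ → Submodule ℝ V) (hF : IsFlag n F) (hG : IsFlag n G) (hH : IsFlag n H)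
    (hFGH : TransverseTriple n F G H)
    (i j k i' j' k' : ℕ) (hi : i < n) (hj : j < n) (hk : k < n)
    (hi' : i' < n) (hj' : j' < n) (hk' : k' < n)
    (hijk : i + j + k = n) (hijk' : i' + j' + k' = n)
    (P Q : Module.End ℝ V)
    (hP : (∀ v ∈ F i, P v = v) ∧ ∀ v ∈ G j ⊔ H k, P v = 0)
    (hQ : (∀ v ∈ G j', Q v = v) ∧ ∀ v ∈ H k' ⊔ F i', Q v = 0) :
    LinearMap.trace ℝ V (P ∘ₗ Q) =
      ((max 0 (min ((i : ℤ) - (i' : ℤ)) ((j' : ℤ) - (j : ℤ))) : ℤ) : ℝ) := by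
  obtain ⟨hP1, hP2⟩ := hP
  obtain ⟨hQ1, hQ2⟩ := hQ
  have hdec : F i ⊔ G j ⊔ H k = ⊤ := hFGH i j k hijk
  have hdec' : F i' ⊔ G j' ⊔ H k' = ⊤ := hFGH i' j' k' hijk'
  -- how Q acts on a decomposed vector
  have hQval : ∀ f ∈ F i', ∀ g ∈ G j', ∀ h ∈ H k', Q (f + g + h) = g := by
    intro f hf g hg h hh
    rw [map_add, map_add, hQ2 f (Submodule.mem_sup_right hf), hQ1 g hg,
      hQ2 h (Submodule.mem_sup_left hh), zero_add, add_zero]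
  have hPval : ∀ f ∈ F i, ∀ g ∈ G j, ∀ h ∈ H k, P (f + g + h) = f := by
    intro f hf g hg h hh
    rw [map_add, map_add, hP1 f hf, hP2 g (Submodule.mem_sup_left hg),
      hP2 h (Submodule.mem_sup_right hh), add_zero, add_zero]
  rcases le_or_gt j' j with hjj | hjj
  · -- `j' ≤ j` : `P ∘ Q = 0`
    have hPQ : P ∘ₗ Q = 0 := by
      ext v
      obtain ⟨f, hf, g, hg, h, hh, rfl⟩ := mem_sup3 hdec' v
      simp only [LinearMap.comp_apply, LinearMap.zero_apply, hQval f hf g hg h hh]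
      exact hP2 g (Submodule.mem_sup_left (flag_mono hG hjj hj.le hg))
    rw [hPQ, map_zero]
    have hval : max 0 (min ((i : ℤ) - (i' : ℤ)) ((j' : ℤ) - (j : ℤ))) = 0 := by omega
    rw [hval]; norm_num
  rcases le_or_gt i i' with hii | hii
  · -- `i ≤ i'` : `Q ∘ P = 0`
    have hQP : Q ∘ₗ P = 0 := by
      ext v
      obtain ⟨f, hf, g, hg, h, hh, rfl⟩ := mem_sup3 hdec v
      simp only [LinearMap.comp_apply, LinearMap.zero_apply, hPval f hf g hg h hh]
      exact hQ2 f (Submodule.mem_sup_right (flag_mono hF hii hi'.le hf))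
    rw [LinearMap.trace_comp_comm' Q P, hQP, map_zero]
    have hval : max 0 (min ((i : ℤ) - (i' : ℤ)) ((j' : ℤ) - (j : ℤ))) = 0 := by omega
    rw [hval]; norm_num
  rcases le_or_gt k k' with hkk | hkk
  · -- `j < j'`, `k ≤ k'` : trace is `j' - j`
    have hQproj : LinearMap.IsProj (G j') Q := by
      constructor
      · intro v
        obtain ⟨f, hf, g, hg, h, hh, rfl⟩ := mem_sup3 hdec' v
        rw [hQval f hf g hg h hh]; exact hg
      · exact hQ1
    have hNproj : LinearMap.IsProj (G j) (Q ∘ₗ (LinearMap.id - P)) := by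
      constructor
      · intro v
        obtain ⟨f, hf, g, hg, h, hh, rfl⟩ := mem_sup3 hdec v
        simp only [LinearMap.comp_apply, LinearMap.sub_apply, LinearMap.id_apply,
          hPval f hf g hg h hh]
        have hrw : f + g + h - f = g + h := by abel
        rw [hrw, map_add, hQ1 g (flag_mono hG hjj.le hj'.le hg),
          hQ2 h (Submodule.mem_sup_left (flag_mono hH hkk hk'.le hh)), add_zero]
        exact hg
      · intro v hv
        simp only [LinearMap.comp_apply, LinearMap.sub_apply, LinearMap.id_apply,
          hP2 v (Submodule.mem_sup_left hv), sub_zero]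
        exact hQ1 v (flag_mono hG hjj.le hj'.le hv)
    have h1 : LinearMap.trace ℝ V Q = (j' : ℝ) := by rw [hQproj.trace, hG.2 j' hj'.le]
    have h2 : LinearMap.trace ℝ V (Q ∘ₗ (LinearMap.id - P)) = (j : ℝ) := by
      rw [hNproj.trace, hG.2 j hj.le]
    have h3 : Q ∘ₗ (LinearMap.id - P) = Q - Q ∘ₗ P := by
      ext v; simp [map_sub]
    have h4 : LinearMap.trace ℝ V (Q ∘ₗ P) = LinearMap.trace ℝ V (P ∘ₗ Q) :=
      LinearMap.trace_comp_comm' P Q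
    rw [h3, map_sub, h1, h4] at h2
    have hval : max 0 (min ((i : ℤ) - (i' : ℤ)) ((j' : ℤ) - (j : ℤ))) = (j' : ℤ) - (j : ℤ) := by
      omega
    rw [hval]; push_cast; linarith
  · -- `i' < i`, `k' < k` : trace is `i - i'`
    have hPproj : LinearMap.IsProj (F i) P := by
      constructor
      · intro v
        obtain ⟨f, hf, g, hg, h, hh, rfl⟩ := mem_sup3 hdec v
        rw [hPval f hf g hg h hh]; exact hf
      · exact hP1
    have hMproj : LinearMap.IsProj (F i') (P ∘ₗ (LinearMap.id - Q)) := by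
      constructor
      · intro v
        obtain ⟨f, hf, g, hg, h, hh, rfl⟩ := mem_sup3 hdec' v
        simp only [LinearMap.comp_apply, LinearMap.sub_apply, LinearMap.id_apply,
          hQval f hf g hg h hh]
        have hrw : f + g + h - g = f + h := by abel
        rw [hrw, map_add, hP1 f (flag_mono hF hii.le hi.le hf),
          hP2 h (Submodule.mem_sup_right (flag_mono hH hkk.le hk.le hh)), add_zero]
        exact hf
      · intro v hv
        simp only [LinearMap.comp_apply, LinearMap.sub_apply, LinearMap.id_apply,
          hQ2 v (Submodule.mem_sup_right hv), sub_zero]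
        exact hP1 v (flag_mono hF hii.le hi.le hv)
    have h1 : LinearMap.trace ℝ V P = (i : ℝ) := by rw [hPproj.trace, hF.2 i hi.le]
    have h2 : LinearMap.trace ℝ V (P ∘ₗ (LinearMap.id - Q)) = (i' : ℝ) := by
      rw [hMproj.trace, hF.2 i' hi'.le]
    have h3 : P ∘ₗ (LinearMap.id - Q) = P - P ∘ₗ Q := by
      ext v; simp [map_sub]
    rw [h3, map_sub, h1] at h2
    have hval : max 0 (min ((i : ℤ) - (i' : ℤ)) ((j' : ℤ) - (j : ℤ))) = (i : ℤ) - (i' : ℤ) := by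
      omega
    rw [hval]; push_cast; linarith
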